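/- Let φ : S → T be a continuous surjective homomorphism of compact semigroups and let J be a regular J-class of T. Then: (1) there is a unique J-class J' of S minimal with respect to the property φ(J') ⊆ J, and J' is the apex of the closed factorial irreducible set φ⁻¹(Fact(J)); (2) J' is regular and φ(J') = J; (3) each R-class, L-class and H-class of S contained in J' maps under φ onto an R-class, L-class, H-class respectively of T contained in J; (4) φ(E(J')) = E(J), where E denotes the set of idempotents. In particular, each maximal subgroup of J' maps homomorphically onto a maximal subgroup of J, and each maximal subgroup of J is the image of a maximal subgroup of J'. -/

import Mathlib

/-- `v` is a factor of `u`: `u ∈ S¹vS¹`. -/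
def IsFactor {S : Type*} [Semigroup S] (v u : S) : Prop :=
  u = v ∨ (∃ x, u = x * v) ∨ (∃ y, u = v * y) ∨ ∃ x y, u = x * v * y

/-- A subset of a semigroup is factorial if it is closed under taking factors. -/
def IsFactorialSet {S : Type*} [Semigroup S] (L : Set S) : Prop :=
  ∀ u ∈ L, ∀ v : S, IsFactor v u → v ∈ L

/-- A subset of a semigroup is irreducible if any two of its elements can be
"glued" inside it. -/
def IsIrreducibleSet {S : Type*} [Semigroup S] (L : Set S) : Prop :=
  ∀ u ∈ L, ∀ v ∈ L, ∃ w : S, u * w * v ∈ L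

/-- Green's preorder: `u ≤_J v` iff `S¹uS¹ ⊆ S¹vS¹`, i.e. `v` is a factor of `u`. -/
def JLe {S : Type*} [Semigroup S] (u v : S) : Prop := IsFactor v u

/-- Green's relation `J`. -/
def JEq {S : Type*} [Semigroup S] (u v : S) : Prop := JLe u v ∧ JLe v u

/-- The `J`-class of an element. -/
def JClass {S : Type*} [Semigroup S] (u : S) : Set S := {x | JEq x u}

/-- The set of all factors of elements of `A`. -/
def FactSet {S : Type*} [Semigroup S] (A : Set S) : Set S :=
  {v | ∃ u ∈ A, IsFactor v u}

/-- Green's preorder `R`: `u ≤_R v` iff `uS¹ ⊆ vS¹`. -/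
def RLe {S : Type*} [Semigroup S] (u v : S) : Prop := u = v ∨ ∃ y, u = v * y

/-- Green's relation `R`. -/
def REq {S : Type*} [Semigroup S] (u v : S) : Prop := RLe u v ∧ RLe v u

/-- Green's preorder `L`: `u ≤_L v` iff `S¹u ⊆ S¹v`. -/
def LLe {S : Type*} [Semigroup S] (u v : S) : Prop := u = v ∨ ∃ x, u = x * v

/-- Green's relation `L`. -/
def LEq {S : Type*} [Semigroup S] (u v : S) : Prop := LLe u v ∧ LLe v u

/-- Green's relation `H = R ∩ L`. -/
def HEq' {S : Type*} [Semigroup S] (u v : S) : Prop := REq u v ∧ LEq u v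

/-- The `R`-class of an element. -/
def RClass {S : Type*} [Semigroup S] (u : S) : Set S := {x | REq x u}

/-- The `L`-class of an element. -/
def LClass {S : Type*} [Semigroup S] (u : S) : Set S := {x | LEq x u}

/-- The `H`-class of an element. -/
def HClass {S : Type*} [Semigroup S] (u : S) : Set S := {x | HEq' x u}

section AuxAlg
variable {S : Type*} [Semigroup S] {T : Type*} [Semigroup T]

/-- Iterated powers: `spow x n = x^(n+1)`. -/
def spow (x : S) : ℕ → S
  | 0 => x
  | n+1 => spow x n * x

lemma spow_comm (x : S) (n : ℕ) : x * spow x n = spow x n * x := by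
  induction n with
  | zero => rfl
  | succ n ih =>
    show x * (spow x n * x) = _
    rw [← mul_assoc, ih]; rfl

lemma spow_succ_left (x : S) (n : ℕ) : spow x (n+1) = x * spow x n := by
  rw [spow_comm]; rfl

lemma map_spow (φ : S →ₙ* T) (x : S) (n : ℕ) : φ (spow x n) = spow (φ x) n := by
  induction n with
  | zero => rfl
  | succ n ih => show φ (spow x n * x) = spow (φ x) n * φ x; rw [map_mul, ih]

lemma spow_idem {x : S} (h : x * x = x) (n : ℕ) : spow x n = x := by
  induction n with
  | zero => rfl
  | succ n ih => show spow x n * x = x; rw [ih, h]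

lemma isFactor_iff {v u : S} :
    IsFactor v u ↔ ∃ x y : WithOne S, (u : WithOne S) = x * v * y := by
  constructor
  · rintro (rfl | ⟨x, rfl⟩ | ⟨y, rfl⟩ | ⟨x, y, rfl⟩)
    · exact ⟨1, 1, by simp⟩
    · exact ⟨x, 1, by simp⟩
    · exact ⟨1, y, by simp⟩
    · exact ⟨x, y, by simp⟩
  · rintro ⟨x, y, h⟩
    induction x with
    | one =>
      induction y with
      | one => exact Or.inl (by simpa using h)
      | coe b => exact Or.inr (Or.inr (Or.inl ⟨b, by rw [one_mul] at h; exact_mod_cast h⟩))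
    | coe a =>
      induction y with
      | one => exact Or.inr (Or.inl ⟨a, by rw [mul_one] at h; exact_mod_cast h⟩)
      | coe b => exact Or.inr (Or.inr (Or.inr ⟨a, b, by exact_mod_cast h⟩))

lemma jle_iff {u v : S} : JLe u v ↔ ∃ x y : WithOne S, (u : WithOne S) = x * v * y :=
  isFactor_iff

lemma rle_iff {u v : S} : RLe u v ↔ ∃ y : WithOne S, (u : WithOne S) = v * y := by
  constructor
  · rintro (rfl | ⟨y, rfl⟩)
    · exact ⟨1, by simp⟩
    · exact ⟨y, by simp⟩
  · rintro ⟨y, h⟩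
    induction y with
    | one => exact Or.inl (by simpa using h)
    | coe b => exact Or.inr ⟨b, by exact_mod_cast h⟩

lemma lle_iff {u v : S} : LLe u v ↔ ∃ x : WithOne S, (u : WithOne S) = x * v := by
  constructor
  · rintro (rfl | ⟨x, rfl⟩)
    · exact ⟨1, by simp⟩
    · exact ⟨x, by simp⟩
  · rintro ⟨x, h⟩
    induction x with
    | one => exact Or.inl (by simpa using h)
    | coe a => exact Or.inr ⟨a, by exact_mod_cast h⟩

lemma jle_refl (u : S) : JLe u u := Or.inl rfl

lemma jeq_refl (u : S) : JEq u u := ⟨jle_refl u, jle_refl u⟩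

lemma jle_trans {u v w : S} (h1 : JLe u v) (h2 : JLe v w) : JLe u w := by
  rw [jle_iff] at *
  obtain ⟨x, y, h1⟩ := h1
  obtain ⟨x', y', h2⟩ := h2
  exact ⟨x * x', y' * y, by rw [h1, h2]; simp [mul_assoc]⟩

lemma jeq_symm {u v : S} (h : JEq u v) : JEq v u := ⟨h.2, h.1⟩

lemma jeq_trans {u v w : S} (h1 : JEq u v) (h2 : JEq v w) : JEq u w :=
  ⟨jle_trans h1.1 h2.1, jle_trans h2.2 h1.2⟩

lemma rle_jle {u v : S} (h : RLe u v) : JLe u v := by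
  rcases h with rfl | ⟨y, rfl⟩
  · exact jle_refl u
  · exact Or.inr (Or.inr (Or.inl ⟨y, rfl⟩))

lemma lle_jle {u v : S} (h : LLe u v) : JLe u v := by
  rcases h with rfl | ⟨x, rfl⟩
  · exact jle_refl u
  · exact Or.inr (Or.inl ⟨x, rfl⟩)

lemma rle_refl (u : S) : RLe u u := Or.inl rfl
lemma lle_refl (u : S) : LLe u u := Or.inl rfl
lemma req_refl (u : S) : REq u u := ⟨rle_refl u, rle_refl u⟩
lemma leq_refl (u : S) : LEq u u := ⟨lle_refl u, lle_refl u⟩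
lemma heq'_refl (u : S) : HEq' u u := ⟨req_refl u, leq_refl u⟩

lemma rle_trans {u v w : S} (h1 : RLe u v) (h2 : RLe v w) : RLe u w := by
  rw [rle_iff] at *
  obtain ⟨y, h1⟩ := h1; obtain ⟨y', h2⟩ := h2
  exact ⟨y' * y, by rw [h1, h2]; simp [mul_assoc]⟩

lemma lle_trans {u v w : S} (h1 : LLe u v) (h2 : LLe v w) : LLe u w := by
  rw [lle_iff] at *
  obtain ⟨x, h1⟩ := h1; obtain ⟨x', h2⟩ := h2
  exact ⟨x * x', by rw [h1, h2]; simp [mul_assoc]⟩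

lemma req_jeq {u v : S} (h : REq u v) : JEq u v := ⟨rle_jle h.1, rle_jle h.2⟩
lemma leq_jeq {u v : S} (h : LEq u v) : JEq u v := ⟨lle_jle h.1, lle_jle h.2⟩

lemma map_isFactor (φ : S →ₙ* T) {v u : S} (h : IsFactor v u) : IsFactor (φ v) (φ u) := by
  rcases h with rfl | ⟨x, rfl⟩ | ⟨y, rfl⟩ | ⟨x, y, rfl⟩
  · exact Or.inl rfl
  · exact Or.inr (Or.inl ⟨φ x, by rw [map_mul]⟩)
  · exact Or.inr (Or.inr (Or.inl ⟨φ y, by rw [map_mul]⟩))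
  · exact Or.inr (Or.inr (Or.inr ⟨φ x, φ y, by rw [map_mul, map_mul]⟩))

lemma map_jle (φ : S →ₙ* T) {u v : S} (h : JLe u v) : JLe (φ u) (φ v) := map_isFactor φ h

lemma map_jeq (φ : S →ₙ* T) {u v : S} (h : JEq u v) : JEq (φ u) (φ v) :=
  ⟨map_jle φ h.1, map_jle φ h.2⟩

lemma map_rle (φ : S →ₙ* T) {u v : S} (h : RLe u v) : RLe (φ u) (φ v) := by
  rcases h with rfl | ⟨y, rfl⟩
  · exact Or.inl rfl
  · exact Or.inr ⟨φ y, by rw [map_mul]⟩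

lemma map_lle (φ : S →ₙ* T) {u v : S} (h : LLe u v) : LLe (φ u) (φ v) := by
  rcases h with rfl | ⟨x, rfl⟩
  · exact Or.inl rfl
  · exact Or.inr ⟨φ x, by rw [map_mul]⟩

lemma map_req (φ : S →ₙ* T) {u v : S} (h : REq u v) : REq (φ u) (φ v) :=
  ⟨map_rle φ h.1, map_rle φ h.2⟩

lemma map_leq (φ : S →ₙ* T) {u v : S} (h : LEq u v) : LEq (φ u) (φ v) :=
  ⟨map_lle φ h.1, map_lle φ h.2⟩

lemma map_heq' (φ : S →ₙ* T) {u v : S} (h : HEq' u v) : HEq' (φ u) (φ v) :=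
  ⟨map_req φ h.1, map_leq φ h.2⟩

/-- Absorption: if `x ≤_R e` with `e` idempotent then `e * x = x`. -/
lemma rle_idem_absorb {x e : S} (h : RLe x e) (he : e * e = e) : e * x = x := by
  rcases h with rfl | ⟨y, rfl⟩
  · exact he
  · rw [← mul_assoc, he]

/-- Absorption: if `x ≤_L e` with `e` idempotent then `x * e = x`. -/
lemma lle_idem_absorb {x e : S} (h : LLe x e) (he : e * e = e) : x * e = x := by
  rcases h with rfl | ⟨y, rfl⟩
  · exact he
  · rw [mul_assoc, he]

/-- Two idempotents in the same `H`-class are equal. -/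
lemma idem_heq_eq {e g : S} (he : e * e = e) (hg : g * g = g) (h : HEq' e g) : e = g := by
  have h1 : e * g = e := lle_idem_absorb h.2.1 hg
  have h2 : e * g = g := by
    rcases h.1.2 with h' | ⟨y, h'⟩
    · rw [h']; exact he
    · rw [h', ← mul_assoc, he]
  rw [← h1, h2]

/-- A sandwich of a genuine element by `WithOne` elements is genuine. -/
lemma coe_sandwich (x y : WithOne S) (a : S) : ∃ b : S, x * (a : WithOne S) * y = (b : WithOne S) := by
  induction x with
  | one =>
    induction y with
    | one => exact ⟨a, by simp⟩
    | coe c => exact ⟨a * c, by simp⟩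
  | coe d =>
    induction y with
    | one => exact ⟨d * a, by simp⟩
    | coe c => exact ⟨d * a * c, by simp⟩

lemma spow_add (x : S) (m n : ℕ) : spow x m * spow x n = spow x (m + n + 1) := by
  induction n with
  | zero => rfl
  | succ n ih =>
    show spow x m * (spow x n * x) = _
    rw [← mul_assoc, ih]; rfl

lemma spow_prod (a c : S) (n : ℕ) : spow ((a, c) : S × S) n = (spow a n, spow c n) := by
  induction n with
  | zero => rfl
  | succ n ih =>
    show spow (a, c) n * (a, c) = _
    rw [ih, Prod.mk_mul_mk]; rfl

lemma req_trans {u v w : S} (h1 : REq u v) (h2 : REq v w) : REq u w :=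
  ⟨rle_trans h1.1 h2.1, rle_trans h2.2 h1.2⟩

lemma leq_trans {u v w : S} (h1 : LEq u v) (h2 : LEq v w) : LEq u w :=
  ⟨lle_trans h1.1 h2.1, lle_trans h2.2 h1.2⟩

lemma req_symm {u v : S} (h : REq u v) : REq v u := ⟨h.2, h.1⟩
lemma leq_symm {u v : S} (h : LEq u v) : LEq v u := ⟨h.2, h.1⟩

end AuxAlg
set_option linter.unusedSectionVars false
section AuxTop
variable {S : Type*} [Semigroup S] [TopologicalSpace S] [CompactSpace S] [T2Space S]
  [ContinuousMul S]

lemma closure_mul_mem {P : Set S} (h : ∀ a ∈ P, ∀ b ∈ P, a * b ∈ P) :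
    ∀ a ∈ closure P, ∀ b ∈ closure P, a * b ∈ closure P := by
  have step1 : ∀ b ∈ P, ∀ a ∈ closure P, a * b ∈ closure P := by
    intro b hb a ha
    have hsub : closure P ⊆ (fun a => a * b) ⁻¹' closure P :=
      closure_minimal (fun x hx => subset_closure (h x hx b hb))
        (isClosed_closure.preimage (continuous_mul_right b))
    exact hsub ha
  intro a ha b hb
  have hsub : closure P ⊆ (fun b => a * b) ⁻¹' closure P :=
    closure_minimal (fun x hx => step1 x hx a ha)
      (isClosed_closure.preimage (continuous_mul_left a))
  exact hsub hb

lemma exists_idem_closure_spow (x : S) :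
    ∃ e ∈ closure (Set.range (spow x)), e * e = e := by
  apply exists_idempotent_in_compact_subsemigroup
  · exact fun r => continuous_mul_right r
  · exact ⟨x, subset_closure ⟨0, rfl⟩⟩
  · exact isClosed_closure.isCompact
  · apply closure_mul_mem
    rintro a ⟨m, rfl⟩ b ⟨n, rfl⟩
    exact ⟨m + n + 1, (spow_add x m n).symm⟩

lemma closure_spow_sub_left (x : S) :
    closure (Set.range (spow x)) ⊆ insert x (Set.range (fun y => x * y)) := by
  apply closure_minimal
  · rintro _ ⟨n, rfl⟩
    cases n with
    | zero => exact Set.mem_insert x _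
    | succ n => exact Set.mem_insert_iff.mpr (Or.inr ⟨spow x n, (spow_succ_left x n).symm⟩)
  · rw [Set.insert_eq]
    exact isClosed_singleton.union (isCompact_range (continuous_mul_left x)).isClosed

lemma closure_spow_sub_right (x : S) :
    closure (Set.range (spow x)) ⊆ insert x (Set.range (fun y => y * x)) := by
  apply closure_minimal
  · rintro _ ⟨n, rfl⟩
    cases n with
    | zero => exact Set.mem_insert x _
    | succ n => exact Set.mem_insert_iff.mpr (Or.inr ⟨spow x n, rfl⟩)
  · rw [Set.insert_eq]
    exact isClosed_singleton.union (isCompact_range (continuous_mul_right x)).isClosed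

lemma stab_core {u a c : S} (h : u = a * u * c) :
    (u = u * c ∨ ∃ y, u = u * c * y) ∧ (u = a * u ∨ ∃ x, u = x * (a * u)) := by
  have hn : ∀ n, u = spow a n * u * spow c n := by
    intro n
    induction n with
    | zero => exact h
    | succ n ih =>
      have e1 : a * (spow a n * u * spow c n) * c = spow a (n+1) * u * spow c (n+1) := by
        rw [spow_succ_left a n]
        show _ = a * spow a n * u * (spow c n * c)
        simp only [mul_assoc]
      rw [← e1, ← ih]; exact h
  have hF : closure (Set.range (spow ((a, c) : S × S))) ⊆
      {p : S × S | p.1 * u * p.2 = u} := by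
    apply closure_minimal
    · rintro _ ⟨n, rfl⟩
      rw [spow_prod]
      exact (hn n).symm
    · exact (isClosed_singleton (x := u)).preimage
        ((continuous_fst.mul continuous_const).mul continuous_snd)
  obtain ⟨p, hp, hpid⟩ := exists_idem_closure_spow ((a, c) : S × S)
  have hpu : p.1 * u * p.2 = u := hF hp
  have hid1 : p.1 * p.1 = p.1 := congrArg Prod.fst hpid
  have hid2 : p.2 * p.2 = p.2 := congrArg Prod.snd hpid
  have hue2 : u * p.2 = u := by
    conv_lhs => rw [← hpu]
    rw [mul_assoc, hid2, hpu]
  have hue1 : p.1 * u = u := by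
    conv_lhs => rw [← hpu]
    rw [← mul_assoc, ← mul_assoc, hid1, hpu]
  have hp2mem : p.2 ∈ closure (Set.range (spow c)) := by
    have h1 : p.2 ∈ closure (Prod.snd '' Set.range (spow ((a, c) : S × S))) :=
      image_closure_subset_closure_image continuous_snd ⟨p, hp, rfl⟩
    refine closure_mono ?_ h1
    rintro _ ⟨_, ⟨n, rfl⟩, rfl⟩
    rw [spow_prod]
    exact ⟨n, rfl⟩
  have hp1mem : p.1 ∈ closure (Set.range (spow a)) := by
    have h1 : p.1 ∈ closure (Prod.fst '' Set.range (spow ((a, c) : S × S))) :=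
      image_closure_subset_closure_image continuous_fst ⟨p, hp, rfl⟩
    refine closure_mono ?_ h1
    rintro _ ⟨_, ⟨n, rfl⟩, rfl⟩
    rw [spow_prod]
    exact ⟨n, rfl⟩
  constructor
  · rcases closure_spow_sub_left c hp2mem with h2 | ⟨y, hy⟩
    · exact Or.inl (by rw [← h2, hue2])
    · replace hy : c * y = p.2 := hy
      refine Or.inr ⟨y, ?_⟩
      rw [mul_assoc, hy, hue2]
  · rcases closure_spow_sub_right a hp1mem with h2 | ⟨x, hx⟩
    · exact Or.inl (by rw [← h2, hue1])
    · replace hx : x * a = p.1 := hx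
      refine Or.inr ⟨x, ?_⟩
      rw [← mul_assoc, hx, hue1]



lemma r_stab {u c : S} (h : JLe u (u * c)) : RLe u (u * c) := by
  rcases h with h | ⟨x, h⟩ | ⟨y, h⟩ | ⟨x, y, h⟩
  · exact Or.inl h
  · have hxy : u = x * u * c := by
      conv_lhs => rw [h]
      rw [mul_assoc]
    have hc := (stab_core hxy).1
    rcases hc with h' | ⟨y, h'⟩
    · exact Or.inl h'
    · exact Or.inr ⟨y, h'⟩
  · exact Or.inr ⟨y, h⟩
  · have hxy : u = x * u * (c * y) := by
      conv_lhs => rw [h]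
      simp only [mul_assoc]
    have hc := (stab_core hxy).1
    rcases hc with h' | ⟨d, h'⟩
    · exact Or.inr ⟨y, by rw [mul_assoc]; exact h'⟩
    · refine Or.inr ⟨y * d, ?_⟩
      conv_lhs => rw [h']
      simp only [mul_assoc]

lemma l_stab {u c : S} (h : JLe u (c * u)) : LLe u (c * u) := by
  rcases h with h | ⟨x, h⟩ | ⟨y, h⟩ | ⟨x, y, h⟩
  · exact Or.inl h
  · exact Or.inr ⟨x, h⟩
  · have hc := (stab_core (show u = c * u * y from h)).2
    rcases hc with h' | ⟨x, h'⟩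
    · exact Or.inl h'
    · exact Or.inr ⟨x, h'⟩
  · have hxy : u = (x * c) * u * y := by
      conv_lhs => rw [h]
      simp only [mul_assoc]
    have hc := (stab_core hxy).2
    rcases hc with h' | ⟨x', h'⟩
    · exact Or.inr ⟨x, by rw [← mul_assoc]; exact h'⟩
    · refine Or.inr ⟨x' * x, ?_⟩
      conv_lhs => rw [h']
      simp only [mul_assoc]

lemma lle_back {z w : S} (h : LLe w z) (hj : JLe z w) : LLe z w := by
  rcases h with h | ⟨x', h⟩
  · exact Or.inl h.symm
  · have h2 := l_stab (u := z) (c := x') (by rw [← h]; exact hj)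
    rwa [← h] at h2

lemma rle_back {z w : S} (h : RLe w z) (hj : JLe z w) : RLe z w := by
  rcases h with h | ⟨y', h⟩
  · exact Or.inl h.symm
  · have h2 := r_stab (u := z) (c := y') (by rw [← h]; exact hj)
    rwa [← h] at h2

end AuxTop
section MainAux
set_option linter.unusedSectionVars false
variable {S : Type*} {T : Type*} [Semigroup S] [Nonempty S]
    [TopologicalSpace S] [CompactSpace S] [T2Space S] [ContinuousMul S]
    [Semigroup T] [Nonempty T] [TopologicalSpace T] [CompactSpace T] [T2Space T]
    [ContinuousMul T]

lemma factor_set_closed (f : T) : IsClosed {t : T | IsFactor t f} := by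
  have hK : IsClosed {p : T × T | p.1 * p.2 = f} :=
    isClosed_singleton.preimage (continuous_fst.mul continuous_snd)
  have hK3 : IsClosed {p : T × T × T | p.1 * p.2.1 * p.2.2 = f} :=
    isClosed_singleton.preimage
      ((continuous_fst.mul (continuous_fst.comp continuous_snd)).mul
        (continuous_snd.comp continuous_snd))
  have h1 : {t : T | IsFactor t f} =
      (({f} ∪ (Prod.snd '' {p : T × T | p.1 * p.2 = f})) ∪
        (Prod.fst '' {p : T × T | p.1 * p.2 = f})) ∪
        ((fun p : T × T × T => p.2.1) '' {p : T × T × T | p.1 * p.2.1 * p.2.2 = f}) := by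
    ext t
    constructor
    · rintro (h | ⟨x, h⟩ | ⟨y, h⟩ | ⟨x, y, h⟩)
      · exact Or.inl (Or.inl (Or.inl h.symm))
      · exact Or.inl (Or.inl (Or.inr ⟨(x, t), h.symm, rfl⟩))
      · exact Or.inl (Or.inr ⟨(t, y), h.symm, rfl⟩)
      · exact Or.inr ⟨(x, t, y), h.symm, rfl⟩
    · rintro (((h | ⟨p, hp, rfl⟩) | ⟨p, hp, rfl⟩) | ⟨p, hp, rfl⟩)
      · exact Or.inl h.symm
      · exact Or.inr (Or.inl ⟨p.1, hp.symm⟩)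
      · exact Or.inr (Or.inr (Or.inl ⟨p.2, hp.symm⟩))
      · exact Or.inr (Or.inr (Or.inr ⟨p.1, p.2.2, hp.symm⟩))
  rw [h1]
  exact ((isClosed_singleton.union (hK.isCompact.image continuous_snd).isClosed).union
    (hK.isCompact.image continuous_fst).isClosed).union
    ((hK3.isCompact.image (continuous_fst.comp continuous_snd)).isClosed)

lemma jle_set_closed (v : S) : IsClosed {x : S | JLe x v} := by
  have h1 : {x : S | JLe x v} =
      (({v} ∪ Set.range (fun a => a * v)) ∪ Set.range (fun y => v * y)) ∪
        Set.range (fun p : S × S => p.1 * v * p.2) := by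
    ext x
    constructor
    · rintro (h | ⟨a, h⟩ | ⟨y, h⟩ | ⟨a, y, h⟩)
      · exact Or.inl (Or.inl (Or.inl h))
      · exact Or.inl (Or.inl (Or.inr ⟨a, h.symm⟩))
      · exact Or.inl (Or.inr ⟨y, h.symm⟩)
      · exact Or.inr ⟨(a, y), h.symm⟩
    · rintro (((h | ⟨a, h⟩) | ⟨y, h⟩) | ⟨p, h⟩)
      · exact Or.inl h
      · exact Or.inr (Or.inl ⟨a, h.symm⟩)
      · exact Or.inr (Or.inr (Or.inl ⟨y, h.symm⟩))
      · exact Or.inr (Or.inr (Or.inr ⟨p.1, p.2, h.symm⟩))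
  rw [h1]
  exact ((isClosed_singleton.union (isCompact_range (continuous_mul_right v)).isClosed).union
    (isCompact_range (continuous_mul_left v)).isClosed).union
    (isCompact_range ((continuous_fst.mul continuous_const).mul continuous_snd)).isClosed

lemma exists_apex (φ : S →ₙ* T) (hcont : Continuous φ) (hsurj : Function.Surjective φ)
    (f : T) (hf : IsIdempotentElem f) :
    ∃ w₀ : S, JLe f (φ w₀) ∧ ∀ v, JLe f (φ v) → JLe w₀ v := by
  classical
  have hff : f * f = f := hf
  obtain ⟨s₀, hs₀⟩ := hsurj f
  have hs₀A : JLe f (φ s₀) := by rw [hs₀]; exact jle_refl f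
  -- irreducibility
  have hirr : ∀ u, JLe f (φ u) → ∀ v, JLe f (φ v) → ∃ c, JLe f (φ (u * c * v)) := by
    intro u hu v hv
    rw [jle_iff] at hu hv
    obtain ⟨x₁, y₁, h₁⟩ := hu
    obtain ⟨x₂, y₂, h₂⟩ := hv
    obtain ⟨b, hb⟩ := coe_sandwich y₁ x₂ f
    obtain ⟨c, hc⟩ := hsurj b
    refine ⟨c, ?_⟩
    rw [jle_iff]
    refine ⟨x₁, y₂, ?_⟩
    calc (f : WithOne T) = ↑f * ↑f * ↑f := by
          rw [← WithOne.coe_mul, ← WithOne.coe_mul, hff, hff]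
    _ = (x₁ * ↑(φ u) * y₁) * ↑f * (x₂ * ↑(φ v) * y₂) := by rw [← h₁, ← h₂]
    _ = x₁ * (↑(φ u) * (y₁ * ↑f * x₂) * ↑(φ v)) * y₂ := by simp only [mul_assoc]
    _ = x₁ * (↑(φ u) * ↑b * ↑(φ v)) * y₂ := by rw [hb]
    _ = x₁ * ↑(φ u * b * φ v) * y₂ := by rw [WithOne.coe_mul, WithOne.coe_mul]
    _ = x₁ * ↑(φ (u * c * v)) * y₂ := by rw [map_mul, map_mul, hc]
  -- gluing finitely many elements
  have hglue : ∀ fs : Finset S, (∀ v ∈ fs, JLe f (φ v)) →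
      ∃ z, JLe f (φ z) ∧ ∀ v ∈ fs, JLe z v := by
    intro fs
    induction fs using Finset.induction_on with
    | empty => exact fun _ => ⟨s₀, hs₀A, by simp⟩
    | @insert a fs hni ih =>
      intro hsub
      obtain ⟨z, hz, hzle⟩ := ih (fun v hv => hsub v (Finset.mem_insert_of_mem hv))
      obtain ⟨c, hc⟩ := hirr z hz a (hsub a (Finset.mem_insert_self a fs))
      refine ⟨z * c * a, hc, ?_⟩
      intro v hv
      rcases Finset.mem_insert.mp hv with rfl | hv
      · exact Or.inr (Or.inl ⟨z * c, rfl⟩)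
      · exact jle_trans (Or.inr (Or.inr (Or.inl ⟨c * a, mul_assoc z c a⟩))) (hzle v hv)
  -- compactness
  have hAclosed : IsClosed {x : S | JLe f (φ x)} :=
    (factor_set_closed f).preimage hcont
  have hne : ({x : S | JLe f (φ x)} ∩
      ⋂ v : {x : S | JLe f (φ x)}, {x : S | JLe x (v : S)}).Nonempty := by
    apply hAclosed.isCompact.inter_iInter_nonempty
    · exact fun v => jle_set_closed (v : S)
    · intro fin
      obtain ⟨z, hz, hzle⟩ := hglue (fin.image Subtype.val)
        (by rintro v hv
            obtain ⟨⟨v', hv'⟩, _, rfl⟩ := Finset.mem_image.mp hv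
            exact hv')
      refine ⟨z, hz, ?_⟩
      apply Set.mem_iInter₂.mpr
      intro i hi
      exact hzle (i : S) (Finset.mem_image.mpr ⟨i, hi, rfl⟩)
  obtain ⟨w₀, hw₀A, hw₀I⟩ := hne
  refine ⟨w₀, hw₀A, fun v hv => ?_⟩
  exact Set.mem_iInter.mp hw₀I ⟨v, hv⟩

lemma exists_w (φ : S →ₙ* T) (hcont : Continuous φ) (hsurj : Function.Surjective φ)
    (f : T) (hf : IsIdempotentElem f) :
    ∃ w : S, w * w = w ∧ φ w = f ∧ ∀ v, JLe f (φ v) → JLe w v := by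
  have hff : f * f = f := hf
  obtain ⟨w₀, hw₀A, hmin⟩ := exists_apex φ hcont hsurj f hf
  rw [jle_iff] at hw₀A
  obtain ⟨x, y, h⟩ := hw₀A
  obtain ⟨α, hα⟩ := coe_sandwich 1 x f
  obtain ⟨β, hβ⟩ := coe_sandwich y 1 f
  rw [one_mul] at hα
  rw [mul_one] at hβ
  have hgen : (f : WithOne T) = ↑α * ↑(φ w₀) * ↑β := by
    calc (f : WithOne T) = ↑f * ↑f * ↑f := by
          rw [← WithOne.coe_mul, ← WithOne.coe_mul, hff, hff]
    _ = ↑f * (x * ↑(φ w₀) * y) * ↑f := by rw [← h]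
    _ = (↑f * x) * ↑(φ w₀) * (y * ↑f) := by simp only [mul_assoc]
    _ = ↑α * ↑(φ w₀) * ↑β := by rw [hα, hβ]
  have hgen' : f = α * φ w₀ * β := by exact_mod_cast hgen
  obtain ⟨a, ha⟩ := hsurj α
  obtain ⟨b, hb⟩ := hsurj β
  set z := a * w₀ * b with hz
  have hφz : φ z = f := by rw [hz, map_mul, map_mul, ha, hb, ← hgen']
  obtain ⟨e, he, heid⟩ := exists_idem_closure_spow z
  have hφe : φ e = f := by
    have hsub : closure (Set.range (spow z)) ⊆ φ ⁻¹' {f} := by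
      apply closure_minimal
      · rintro _ ⟨n, rfl⟩
        show φ (spow z n) = f
        rw [map_spow, hφz, spow_idem hff]
      · exact isClosed_singleton.preimage hcont
    exact hsub he
  have hez : JLe e z := by
    rcases closure_spow_sub_left z he with h' | ⟨y', hy'⟩
    · exact Or.inl h'
    · exact Or.inr (Or.inr (Or.inl ⟨y', hy'.symm⟩))
  have hzw₀ : JLe z w₀ := Or.inr (Or.inr (Or.inr ⟨a, b, rfl⟩))
  exact ⟨e, heid, hφe, fun v hv => jle_trans (jle_trans hez hzw₀) (hmin v hv)⟩

end MainAux
section MainAux2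
set_option linter.unusedSectionVars false
variable {S : Type*} {T : Type*} [Semigroup S] [Nonempty S]
    [TopologicalSpace S] [CompactSpace S] [T2Space S] [ContinuousMul S]
    [Semigroup T] [Nonempty T] [TopologicalSpace T] [CompactSpace T] [T2Space T]
    [ContinuousMul T]

/-- Every element `J`-equivalent to the idempotent `w` is regular. -/
lemma exists_inverse (φ : S →ₙ* T) (f : T) (w : S) (hwid : w * w = w)
    (u : S) (hu : JEq u w) : ∃ v, u * v * u = u ∧ v * u * v = v := by
  obtain ⟨x, y, hxy⟩ := jle_iff.mp hu.2
  -- produce z with LLe w z, REq u z, JLe z w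
  obtain ⟨z, hwz, huz, hzw⟩ : ∃ z : S, LLe w z ∧ REq u z ∧ JLe z w := by
    induction y with
    | one =>
      refine ⟨u, ?_, req_refl u, hu.1⟩
      rw [lle_iff]; exact ⟨x, by simpa using hxy⟩
    | coe b =>
      have hwub : LLe w (u * b) := by
        rw [lle_iff]
        exact ⟨x, by rw [hxy, WithOne.coe_mul, mul_assoc]⟩
      have hjwub : JLe w (u * b) := lle_jle hwub
      have hjub : JLe u (u * b) := jle_trans hu.1 hjwub
      refine ⟨u * b, hwub, ⟨r_stab hjub, Or.inr ⟨b, rfl⟩⟩, ?_⟩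
      exact jle_trans (rle_jle (Or.inr ⟨b, rfl⟩ : RLe (u * b) u)) hu.1
  have hzwL : LLe z w := lle_back hwz hzw
  have hzww : z * w = z := lle_idem_absorb hzwL hwid
  -- x₀ with z * x₀ * z = z
  obtain ⟨x₀, hx₀⟩ : ∃ x₀, z * x₀ * z = z := by
    rcases hwz with rfl | ⟨x', h⟩
    · exact ⟨w, by rw [hwid, hwid]⟩
    · exact ⟨x', by rw [mul_assoc, ← h, hzww]⟩
  -- v₀ with u * v₀ * u = u
  obtain ⟨v₀, hv₀⟩ : ∃ v₀, u * v₀ * u = u := by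
    rcases huz.1 with h1 | ⟨q, h1⟩
    · exact ⟨x₀, by rw [h1, hx₀]⟩
    · rcases huz.2 with h2 | ⟨p, h2⟩
      · exact ⟨x₀, by rw [← h2, hx₀]⟩
      · refine ⟨p * x₀, ?_⟩
        calc u * (p * x₀) * u = u * p * x₀ * u := by simp only [mul_assoc]
        _ = z * x₀ * u := by rw [← h2]
        _ = z * x₀ * (z * q) := by rw [h1]
        _ = z * x₀ * z * q := by rw [← mul_assoc]
        _ = z * q := by rw [hx₀]
        _ = u := h1.symm
  have hv₀' : u * (v₀ * u) = u := by rw [← mul_assoc, hv₀]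
  have hgen : ∀ x, u * (v₀ * (u * x)) = u * x := by
    intro x
    rw [← mul_assoc, ← mul_assoc, hv₀]
  refine ⟨v₀ * u * v₀, ?_, ?_⟩
  · show u * (v₀ * u * v₀) * u = u
    have : u * (v₀ * u * v₀) * u = u * (v₀ * (u * (v₀ * u))) := by simp only [mul_assoc]
    rw [this, hgen, hv₀']
  · show v₀ * u * v₀ * u * (v₀ * u * v₀) = v₀ * u * v₀
    have h1 : v₀ * u * v₀ * u * (v₀ * u * v₀) = v₀ * (u * (v₀ * (u * (v₀ * (u * v₀))))) := by
      simp only [mul_assoc]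
    rw [h1, hgen, hgen, ← mul_assoc]

/-- For an idempotent `g` in the apex class, `g` lies in the closure of the powers
of any element of `gSg` in the fibre of `φ g`. -/
lemma g_mem_closure_spow (φ : S →ₙ* T) (hcont : Continuous φ) (f : T) (w : S)
    (hwmin : ∀ v, JLe f (φ v) → JLe w v)
    (g : S) (hgid : g * g = g) (hgw : JEq g w) (hφgid : φ g * φ g = φ g)
    (hg'J : JLe f (φ g)) (c s : S) (hc : c = g * s * g) (hφc : φ c = φ g) :
    g ∈ closure (Set.range (spow c)) := by
  obtain ⟨ε, hε, hεid⟩ := exists_idem_closure_spow c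
  have hgsg : closure (Set.range (spow c)) ⊆ Set.range (fun s => g * s * g) := by
    apply closure_minimal
    · rintro _ ⟨k, rfl⟩
      induction k with
      | zero => exact ⟨s, hc.symm⟩
      | succ k ih =>
        obtain ⟨d, hd⟩ := ih
        refine ⟨d * g * g * s, ?_⟩
        show g * (d * g * g * s) * g = spow c k * c
        rw [← hd, hc]
        simp only [mul_assoc]
    · exact (isCompact_range (by continuity)).isClosed
  have hφε : φ ε = φ g := by
    have hsub : closure (Set.range (spow c)) ⊆ φ ⁻¹' {φ g} := by
      apply closure_minimal
      · rintro _ ⟨k, rfl⟩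
        show φ (spow c k) = φ g
        rw [map_spow, hφc, spow_idem hφgid]
      · exact isClosed_singleton.preimage hcont
    exact hsub hε
  obtain ⟨s₁, hs₁⟩ := hgsg hε
  replace hs₁ : g * s₁ * g = ε := hs₁
  have hεA : JLe f (φ ε) := by rw [hφε]; exact hg'J
  have hgε : JLe g ε := jle_trans hgw.1 (hwmin ε hεA)
  have hε' : g * (s₁ * g) = ε := by rw [← mul_assoc, hs₁]
  have hrle : RLe g ε := by
    have h2 := r_stab (u := g) (c := s₁ * g) (by rw [hε']; exact hgε)
    rwa [hε'] at h2
  have hlle : LLe g ε := by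
    have h2 := l_stab (u := g) (c := g * s₁) (by rw [mul_assoc, hε']; exact hgε)
    rwa [mul_assoc, hε'] at h2
  have hεg : ε = g :=
    idem_heq_eq hεid hgid ⟨⟨Or.inr ⟨s₁ * g, hε'.symm⟩, hrle⟩,
      ⟨Or.inr ⟨g * s₁, by rw [mul_assoc, hε']⟩, hlle⟩⟩
  rw [← hεg]; exact hε

/-- Lifting elements of maximal subgroups. -/
lemma group_lift (φ : S →ₙ* T) (hcont : Continuous φ) (hsurj : Function.Surjective φ)
    (f : T) (hf : IsIdempotentElem f) (w : S) (hwid : w * w = w) (hwf : φ w = f)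
    (hwmin : ∀ v, JLe f (φ v) → JLe w v)
    (g : S) (hgid : g * g = g) (hgw : JEq g w)
    (θ : T) (hθ : HEq' θ (φ g)) : ∃ x, HEq' x g ∧ φ x = θ := by
  have hg'id : φ g * φ g = φ g := by rw [← map_mul, hgid]
  have hg'J : JEq (φ g) f := by rw [← hwf]; exact map_jeq φ hgw
  have hθg' : θ * φ g = θ := lle_idem_absorb hθ.2.1 hg'id
  have hg'θ : φ g * θ = θ := rle_idem_absorb hθ.1.1 hg'id
  rcases hθ.1.2 with hcase | ⟨δ, hδ⟩
  · exact ⟨g, heq'_refl g, hcase⟩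
  rcases hθ.2.2 with hcase2 | ⟨γ, hγ⟩
  · exact ⟨g, heq'_refl g, hcase2⟩
  set g' := φ g with hg'
  set θs := g' * δ * g' with hθs
  have hg'θs : g' * θs = θs := by
    rw [hθs, ← mul_assoc, ← mul_assoc, hg'id]
  have hθsg' : θs * g' = θs := by
    rw [hθs, mul_assoc (g' * δ) g' g', hg'id]
  have hθθs : θ * θs = g' := by
    calc θ * (g' * δ * g') = (θ * g') * δ * g' := by simp only [mul_assoc]
    _ = θ * δ * g' := by rw [hθg']
    _ = g' * g' := by rw [← hδ]
    _ = g' := hg'id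
  have hθsθ : θs * θ = g' := by
    have h2 : (g' * γ * g') * θ = g' := by
      calc (g' * γ * g') * θ = g' * γ * (g' * θ) := by simp only [mul_assoc]
      _ = g' * γ * θ := by rw [hg'θ]
      _ = g' * (γ * θ) := by rw [mul_assoc]
      _ = g' * g' := by rw [← hγ]
      _ = g' := hg'id
    have heq2 : g' * γ * g' = θs := by
      calc g' * γ * g' = (g' * γ * g') * g' := by rw [mul_assoc (g' * γ) g' g', hg'id]
      _ = (g' * γ * g') * (θ * θs) := by rw [hθθs]
      _ = ((g' * γ * g') * θ) * θs := by rw [← mul_assoc]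
      _ = g' * θs := by rw [h2]
      _ = θs := hg'θs
    rw [← heq2]; exact h2
  obtain ⟨p, hp⟩ := hsurj θ
  obtain ⟨q, hq⟩ := hsurj θs
  set m := g * p * g with hm
  set n := g * q * g with hn
  have hφm : φ m = θ := by
    rw [hm, map_mul, map_mul, hp, ← hg']
    rw [hg'θ, hθg']
  have hφn : φ n = θs := by
    rw [hn, map_mul, map_mul, hq, ← hg']
    rw [hg'θs, hθsg']
  have hφmn : φ (m * n) = φ g := by rw [map_mul, hφm, hφn, hθθs]
  have hφnm : φ (n * m) = φ g := by rw [map_mul, hφn, hφm, hθsθ]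
  have hmnform : m * n = g * (p * g * g * q) * g := by
    rw [hm, hn]; simp only [mul_assoc]
  have hnmform : n * m = g * (q * g * g * p) * g := by
    rw [hm, hn]; simp only [mul_assoc]
  have hgm : g ∈ closure (Set.range (spow (m * n))) :=
    g_mem_closure_spow φ hcont f w hwmin g hgid hgw hg'id hg'J.2 (m * n) _ hmnform hφmn
  have hgnm : g ∈ closure (Set.range (spow (n * m))) :=
    g_mem_closure_spow φ hcont f w hwmin g hgid hgw hg'id hg'J.2 (n * m) _ hnmform hφnm
  -- g = m * y
  have hsub1 : closure (Set.range (spow (m * n))) ⊆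
      (fun d => m * d) '' closure (insert n (Set.range (fun j => n * spow (m * n) j))) := by
    apply closure_minimal
    · rintro _ ⟨k, rfl⟩
      cases k with
      | zero => exact ⟨n, subset_closure (Set.mem_insert n _), rfl⟩
      | succ k =>
        refine ⟨n * spow (m * n) k, subset_closure (Set.mem_insert_iff.mpr (Or.inr ⟨k, rfl⟩)), ?_⟩
        show m * (n * spow (m * n) k) = spow (m * n) (k + 1)
        rw [spow_succ_left]
        exact (mul_assoc m n _).symm
    · exact ((isClosed_closure.isCompact).image (continuous_mul_left m)).isClosed
  obtain ⟨y, -, hy⟩ := hsub1 hgm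
  replace hy : m * y = g := hy
  -- g = y' * m
  have hsub2 : closure (Set.range (spow (n * m))) ⊆
      (fun d => d * m) '' closure (insert n (Set.range (fun j => spow (n * m) j * n))) := by
    apply closure_minimal
    · rintro _ ⟨k, rfl⟩
      cases k with
      | zero => exact ⟨n, subset_closure (Set.mem_insert n _), rfl⟩
      | succ k =>
        refine ⟨spow (n * m) k * n, subset_closure (Set.mem_insert_iff.mpr (Or.inr ⟨k, rfl⟩)), ?_⟩
        show (spow (n * m) k * n) * m = spow (n * m) (k + 1)
        exact mul_assoc (spow (n * m) k) n m
    · exact ((isClosed_closure.isCompact).image (continuous_mul_right m)).isClosed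
  obtain ⟨y', -, hy'⟩ := hsub2 hgnm
  replace hy' : y' * m = g := hy'
  refine ⟨m, ⟨⟨Or.inr ⟨p * g, by rw [hm, mul_assoc]⟩, Or.inr ⟨y, hy.symm⟩⟩,
    ⟨Or.inr ⟨g * p, hm⟩, Or.inr ⟨y', hy'.symm⟩⟩⟩, hφm⟩

end MainAux2
section MainAux3
set_option linter.unusedSectionVars false
variable {S : Type*} {T : Type*} [Semigroup S] [Nonempty S]
    [TopologicalSpace S] [CompactSpace S] [T2Space S] [ContinuousMul S]
    [Semigroup T] [Nonempty T] [TopologicalSpace T] [CompactSpace T] [T2Space T]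
    [ContinuousMul T]

lemma jeq_phi_f (φ : S →ₙ* T) (f : T) (w : S) (hwf : φ w = f) (u : S) (hu : JEq u w) :
    JEq (φ u) f := by
  rw [← hwf]; exact map_jeq φ hu

lemma r_onto (φ : S →ₙ* T) (hsurj : Function.Surjective φ) (f : T) (w : S)
    (hwf : φ w = f) (hwmin : ∀ v, JLe f (φ v) → JLe w v)
    (u : S) (hu : JEq u w) : φ '' RClass u = RClass (φ u) := by
  apply Set.Subset.antisymm
  · rintro _ ⟨x, hx, rfl⟩
    exact map_req φ hx
  · intro t' ht'
    rcases (ht' : REq t' (φ u)).1 with h | ⟨β, h⟩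
    · exact ⟨u, req_refl u, h.symm⟩
    · obtain ⟨b, hb⟩ := hsurj β
      have hub : JLe f (φ (u * b)) := by
        have h1 : JEq t' f := jeq_trans (req_jeq ht') (jeq_phi_f φ f w hwf u hu)
        rw [map_mul, hb, ← h]
        exact h1.2
      refine ⟨u * b, ⟨?_, ?_⟩, by rw [map_mul, hb, ← h]⟩
      · exact Or.inr ⟨b, rfl⟩
      · exact r_stab (jle_trans hu.1 (hwmin _ hub))
    
lemma l_onto (φ : S →ₙ* T) (hsurj : Function.Surjective φ) (f : T) (w : S)
    (hwf : φ w = f) (hwmin : ∀ v, JLe f (φ v) → JLe w v)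
    (u : S) (hu : JEq u w) : φ '' LClass u = LClass (φ u) := by
  apply Set.Subset.antisymm
  · rintro _ ⟨x, hx, rfl⟩
    exact map_leq φ hx
  · intro t' ht'
    rcases (ht' : LEq t' (φ u)).1 with h | ⟨α, h⟩
    · exact ⟨u, leq_refl u, h.symm⟩
    · obtain ⟨a, ha⟩ := hsurj α
      have hau : JLe f (φ (a * u)) := by
        have h1 : JEq t' f := jeq_trans (leq_jeq ht') (jeq_phi_f φ f w hwf u hu)
        rw [map_mul, ha, ← h]
        exact h1.2
      refine ⟨a * u, ⟨?_, ?_⟩, by rw [map_mul, ha, ← h]⟩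
      · exact Or.inr ⟨a, rfl⟩
      · exact l_stab (jle_trans hu.1 (hwmin _ hau))

lemma h_onto (φ : S →ₙ* T) (hcont : Continuous φ) (hsurj : Function.Surjective φ)
    (f : T) (hf : IsIdempotentElem f) (w : S) (hwid : w * w = w) (hwf : φ w = f)
    (hwmin : ∀ v, JLe f (φ v) → JLe w v)
    (u : S) (hu : JEq u w) : φ '' HClass u = HClass (φ u) := by
  apply Set.Subset.antisymm
  · rintro _ ⟨x, hx, rfl⟩
    exact map_heq' φ hx
  · intro t' ht'
    replace ht' : HEq' t' (φ u) := ht'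
    obtain ⟨v, hvu, hvv⟩ := exists_inverse φ f w hwid u hu
    have hgid : (u * v) * (u * v) = u * v := by
      rw [show u * v * (u * v) = (u * v * u) * v by simp only [mul_assoc], hvu]
    have hreq_gu : REq (u * v) u := ⟨Or.inr ⟨v, rfl⟩, Or.inr ⟨u, hvu.symm⟩⟩
    have hgw : JEq (u * v) w := jeq_trans (req_jeq hreq_gu) hu
    have hu'vu : φ u * φ v * φ u = φ u := by rw [← map_mul, ← map_mul, hvu]
    have hg2id : (φ u * φ v) * (φ u * φ v) = φ u * φ v := by
      rw [show (φ u * φ v) * (φ u * φ v) = (φ u * φ v * φ u) * φ v by simp only [mul_assoc],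
        hu'vu]
    have hvuv' : φ v * φ u * φ v = φ v := by rw [← map_mul, ← map_mul, hvv]
    have hh2id : (φ v * φ u) * (φ v * φ u) = φ v * φ u := by
      rw [show (φ v * φ u) * (φ v * φ u) = (φ v * φ u * φ v) * φ u by simp only [mul_assoc],
        hvuv']
    have hllet'h : LLe t' (φ v * φ u) :=
      lle_trans ht'.2.1 (Or.inr ⟨φ u, by rw [← mul_assoc, hu'vu]⟩)
    have ht'h : t' * (φ v * φ u) = t' := lle_idem_absorb hllet'h hh2id
    have hRLe_u'g : RLe (φ u) (φ u * φ v) := Or.inr ⟨φ u, hu'vu.symm⟩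
    have hREq_u'g : REq (φ u) (φ u * φ v) := ⟨hRLe_u'g, Or.inr ⟨φ v, rfl⟩⟩
    have hθu' : (t' * φ v) * φ u = t' := by rw [mul_assoc]; exact ht'h
    have hREqθt' : REq (t' * φ v) t' := ⟨Or.inr ⟨φ v, rfl⟩, Or.inr ⟨φ u, hθu'.symm⟩⟩
    have hREqθg2 : REq (t' * φ v) (φ u * φ v) := req_trans (req_trans hREqθt' ht'.1) hREq_u'g
    have hLEqθg2 : LEq (t' * φ v) (φ u * φ v) := by
      constructor
      · rcases ht'.2.1 with h | ⟨z, h⟩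
        · exact Or.inl (by rw [h])
        · exact Or.inr ⟨z, by rw [h, mul_assoc]⟩
      · rcases ht'.2.2 with h | ⟨z, h⟩
        · exact Or.inl (by rw [← h])
        · exact Or.inr ⟨z, by rw [h, mul_assoc]⟩
    obtain ⟨x, hxH, hφx⟩ := group_lift φ hcont hsurj f hf w hwid hwf hwmin (u * v) hgid hgw
      (t' * φ v) (by rw [map_mul]; exact ⟨hREqθg2, hLEqθg2⟩)
    have hxg : x * (u * v) = x := lle_idem_absorb hxH.2.1 hgid
    refine ⟨x * u, ⟨?_, ?_⟩, by rw [map_mul, hφx]; exact hθu'⟩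
    · have h1 : REq (x * u) x := ⟨Or.inr ⟨u, rfl⟩, Or.inr ⟨v, by rw [mul_assoc, hxg]⟩⟩
      exact req_trans (req_trans h1 hxH.1) hreq_gu
    · constructor
      · exact Or.inr ⟨x, rfl⟩
      · rcases hxH.2.2 with h | ⟨z, h⟩
        · refine Or.inl ?_
          rw [← h]
          exact hvu.symm
        · refine Or.inr ⟨z, ?_⟩
          conv_lhs => rw [← hvu]
          rw [h, mul_assoc]

end MainAux3
/-- Lifting a regular `J`-class `J = JClass f` (`f` an idempotent of `T`) along a
continuous surjective homomorphism `φ : S → T` of compact semigroups: there is a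
unique `J`-class `J'` of `S` minimal with `φ(J') ⊆ J`; it is the apex of
`φ⁻¹(Fact(J))`; it is regular with `φ(J') = J`; each `R`-, `L`- and `H`-class of
`J'` maps onto the corresponding class of `J`; and `φ(E(J')) = E(J)`. -/
theorem lift_regular_JClass {S T : Type*} [Semigroup S] [Nonempty S]
    [TopologicalSpace S] [CompactSpace S] [T2Space S] [ContinuousMul S]
    [Semigroup T] [Nonempty T] [TopologicalSpace T] [CompactSpace T] [T2Space T]
    [ContinuousMul T] (φ : S →ₙ* T) (hcont : Continuous φ)
    (hsurj : Function.Surjective φ) (f : T) (hf : IsIdempotentElem f) :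
    ∃ w : S,
      -- (1) the `J`-class of `w` maps into `J` and is minimal as such
      (φ '' JClass w ⊆ JClass f) ∧
      (∀ v : S, φ '' JClass v ⊆ JClass f → JLe v w → JEq v w) ∧
      -- (1) uniqueness of the minimal such `J`-class
      (∀ v : S, φ '' JClass v ⊆ JClass f →
        (∀ v' : S, φ '' JClass v' ⊆ JClass f → JLe v' v → JEq v' v) → JEq v w) ∧
      -- (1) it is the apex of `φ⁻¹(Fact(J))`
      (JClass w ⊆ φ ⁻¹' FactSet (JClass f)) ∧
      (∀ v ∈ φ ⁻¹' FactSet (JClass f), JLe v w → JEq v w) ∧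
      -- (2) regularity and surjectivity onto `J`
      (∃ e : S, IsIdempotentElem e ∧ JEq e w) ∧
      (φ '' JClass w = JClass f) ∧
      -- (3) `R`-, `L`- and `H`-classes of `J'` map onto corresponding classes of `J`
      (∀ u : S, JEq u w → φ u ∈ JClass f ∧
        φ '' RClass u = RClass (φ u) ∧ φ '' LClass u = LClass (φ u) ∧
        φ '' HClass u = HClass (φ u)) ∧
      -- (4) idempotents of `J'` map onto the idempotents of `J`
      (φ '' {x | x ∈ JClass w ∧ IsIdempotentElem x}
        = {y | y ∈ JClass f ∧ IsIdempotentElem y}) ∧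
      -- in particular, maximal subgroups of `J'` map onto maximal subgroups of `J`,
      (∀ e : S, e ∈ JClass w → IsIdempotentElem e →
        IsIdempotentElem (φ e) ∧ φ e ∈ JClass f ∧ φ '' HClass e = HClass (φ e)) ∧
      -- and every maximal subgroup of `J` is such an image
      (∀ g : T, g ∈ JClass f → IsIdempotentElem g →
        ∃ e : S, e ∈ JClass w ∧ IsIdempotentElem e ∧ φ e = g ∧
          φ '' HClass e = HClass g) := by
  obtain ⟨w, hwid, hwf, hwmin⟩ := exists_w φ hcont hsurj f hf
  have hphiJ : ∀ u : S, JEq u w → JEq (φ u) f := jeq_phi_f φ f w hwf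
  have himg : φ '' JClass w ⊆ JClass f := by
    rintro _ ⟨x, hx, rfl⟩
    exact hphiJ x hx
  have hAmem : ∀ v : S, φ '' JClass v ⊆ JClass f → JLe f (φ v) := by
    intro v hv
    have h1 : φ v ∈ JClass f := hv ⟨v, jeq_refl v, rfl⟩
    exact (h1 : JEq (φ v) f).2
  have hmin1 : ∀ v : S, φ '' JClass v ⊆ JClass f → JLe v w → JEq v w := by
    intro v hv hvw
    exact ⟨hvw, hwmin v (hAmem v hv)⟩
  have hff : f * f = f := hf
  have hjonto : ∀ t, JEq t f → ∃ u, JEq u w ∧ φ u = t := by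
    intro t ht
    obtain ⟨x, y, h⟩ := jle_iff.mp ht.1
    obtain ⟨α, hα⟩ := coe_sandwich x 1 f
    obtain ⟨β, hβ⟩ := coe_sandwich 1 y f
    rw [mul_one] at hα
    rw [one_mul] at hβ
    have hgen : (t : WithOne T) = ↑α * ↑f * ↑β := by
      calc (t : WithOne T) = x * ↑f * y := h
      _ = x * (↑f * ↑f * ↑f) * y := by
          rw [← WithOne.coe_mul, ← WithOne.coe_mul, hff, hff]
      _ = (x * ↑f) * ↑f * (↑f * y) := by simp only [mul_assoc]
      _ = ↑α * ↑f * ↑β := by rw [hα, hβ]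
    have hαβ : t = α * f * β := by exact_mod_cast hgen
    obtain ⟨a, ha⟩ := hsurj α
    obtain ⟨b, hb⟩ := hsurj β
    have hφu : φ (a * w * b) = t := by rw [map_mul, map_mul, ha, hb, hwf, ← hαβ]
    have huA : JLe f (φ (a * w * b)) := by rw [hφu]; exact ht.2
    exact ⟨a * w * b, ⟨Or.inr (Or.inr (Or.inr ⟨a, b, rfl⟩)), hwmin _ huA⟩, hφu⟩
  have hidlift : ∀ g' : T, JEq g' f → g' * g' = g' →
      ∃ e, JEq e w ∧ e * e = e ∧ φ e = g' := by
    intro g' hg'J hg'id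
    obtain ⟨u, huw, hφu⟩ := hjonto g' hg'J
    obtain ⟨ε, hε, hεid⟩ := exists_idem_closure_spow u
    have hφε : φ ε = g' := by
      have hsub : closure (Set.range (spow u)) ⊆ φ ⁻¹' {g'} := by
        apply closure_minimal
        · rintro _ ⟨n, rfl⟩
          show φ (spow u n) = g'
          rw [map_spow, hφu, spow_idem hg'id]
        · exact isClosed_singleton.preimage hcont
      exact hsub hε
    have hεu : JLe ε u := by
      rcases closure_spow_sub_left u hε with h' | ⟨y', hy'⟩
      · exact Or.inl h'
      · exact Or.inr (Or.inr (Or.inl ⟨y', hy'.symm⟩))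
    have hεA : JLe f (φ ε) := by rw [hφε]; exact hg'J.2
    exact ⟨ε, ⟨jle_trans hεu huw.1, hwmin ε hεA⟩, hεid, hφε⟩
  refine ⟨w, himg, hmin1, ?_, ?_, ?_, ⟨w, hwid, jeq_refl w⟩, ?_, ?_, ?_, ?_, ?_⟩
  · intro v hv hminv
    exact jeq_symm (hminv w himg (hwmin v (hAmem v hv)))
  · intro x hx
    exact ⟨f, jeq_refl f, (hphiJ x hx).2⟩
  · intro v hv hvw
    obtain ⟨t, ht, htf⟩ := hv
    exact ⟨hvw, hwmin v (jle_trans (ht : JEq t f).2 htf)⟩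
  · apply Set.Subset.antisymm himg
    intro t ht
    obtain ⟨u, huw, hφu⟩ := hjonto t ht
    exact ⟨u, huw, hφu⟩
  · intro u hu
    exact ⟨hphiJ u hu, r_onto φ hsurj f w hwf hwmin u hu,
      l_onto φ hsurj f w hwf hwmin u hu,
      h_onto φ hcont hsurj f hf w hwid hwf hwmin u hu⟩
  · apply Set.Subset.antisymm
    · rintro _ ⟨x, ⟨hx, hxid⟩, rfl⟩
      refine ⟨hphiJ x hx, ?_⟩
      show φ x * φ x = φ x
      rw [← map_mul, hxid.eq]
    · rintro y ⟨hy, hyid⟩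
      obtain ⟨e, hew, heid, hφe⟩ := hidlift y hy hyid.eq
      exact ⟨e, ⟨hew, heid⟩, hφe⟩
  · intro e he heid
    refine ⟨?_, hphiJ e he, h_onto φ hcont hsurj f hf w hwid hwf hwmin e he⟩
    show φ e * φ e = φ e
    rw [← map_mul, heid.eq]
  · intro g hg hgid
    obtain ⟨e, hew, heid, hφe⟩ := hidlift g hg hgid.eq
    refine ⟨e, hew, heid, hφe, ?_⟩
    rw [← hφe]
    exact h_onto φ hcont hsurj f hf w hwid hwf hwmin e hew
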